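/- For every x ∈ X and every n ∈ ℤ, the local essential ranges satisfy E_{T^n x}(f) = f(n,x) · E_x(f) · f(n,x)^{-1}. -/

import Mathlib

open Topology Pointwise Set Filter

section Defs

variable {X : Type*} [TopologicalSpace X] {G : Type*} [TopologicalSpace G] [Group G]

/-- The positive-iterate part of the cocycle generated by `f` over `T`:
`f(n,x) = f(T^{n-1}x) ⋯ f(Tx) · f(x)` for `n ≥ 1` and `f(0,x) = e`. -/
def cocycleNat (T : X ≃ₜ X) (f : X → G) : ℕ → X → G
  | 0, _ => 1
  | n + 1, x => f ((T.toEquiv ^ n) x) * cocycleNat T f n x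

/-- The cocycle generated by `f` over `T`, at integer times:
`f(n,x)` as above for `n ≥ 0` and `f(n,x) = f(-n, T^n x)⁻¹` for `n < 0`. -/
def cocycle (T : X ≃ₜ X) (f : X → G) (n : ℤ) (x : X) : G :=
  if 0 ≤ n then cocycleNat T f n.toNat x
  else (cocycleNat T f (-n).toNat ((T.toEquiv ^ n) x))⁻¹

/-- The `n`-th power of the skew product `T_f` on `X × G`:
`T_f^n (x,g) = (T^n x, f(n,x)·g)`. -/
def skewPow (T : X ≃ₜ X) (f : X → G) (n : ℤ) (p : X × G) : X × G :=
  ((T.toEquiv ^ n) p.1, cocycle T f n p.1 * p.2)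

/-- The `n`-th power of the skew product `T_f` acting on `X × G/H`:
`T_f^n (x, gH) = (T^n x, f(n,x)·gH)`. -/
def skewPowQ (T : X ≃ₜ X) (f : X → G) (H : Subgroup G) (n : ℤ) (p : X × (G ⧸ H)) :
    X × (G ⧸ H) :=
  ((T.toEquiv ^ n) p.1, cocycle T f n p.1 • p.2)

/-- The local essential range `E_x(f)`: all `g ∈ G` such that for every open
neighbourhood `U` of `x` and every open neighbourhood `V` of the identity there are
`n ∈ ℤ` and `y ∈ U ∩ T⁻ⁿU` with `f(n,y) ∈ V·g`. -/
def essRange (T : X ≃ₜ X) (f : X → G) (x : X) : Set G :=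
  {g | ∀ U : Set X, IsOpen U → x ∈ U → ∀ V : Set G, IsOpen V → (1 : G) ∈ V →
    ∃ n : ℤ, ∃ y ∈ U, (T.toEquiv ^ n) y ∈ U ∧ ∃ v ∈ V, cocycle T f n y = v * g}

/-- `P_x(f)`: the vertical section at `x` of the closure of the `T_f`-orbit of `(x,e)`. -/
def Pset (T : X ≃ₜ X) (f : X → G) (x : X) : Set G :=
  {g | (x, g) ∈ closure (Set.range fun n : ℤ => skewPow T f n (x, 1))}

/-- `𝒟(f) = {x : E_x(f) = P_x(f)}`. -/
def Dset (T : X ≃ₜ X) (f : X → G) : Set X :=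
  {x | essRange T f x = Pset T f x}

/-- Topological recurrence of the cocycle generated by `f`: for every open
neighbourhood `V` of the identity of `G` and every nonempty open `U ⊆ X` there is
`n ≠ 0` with `T⁻ⁿU ∩ U ∩ {x : f(n,x) ∈ V} ≠ ∅`. -/
def IsRecurrentCocycle (T : X ≃ₜ X) (f : X → G) : Prop :=
  ∀ V : Set G, IsOpen V → (1 : G) ∈ V → ∀ U : Set X, IsOpen U → U.Nonempty →
    ∃ n : ℤ, n ≠ 0 ∧ ∃ x ∈ U, (T.toEquiv ^ n) x ∈ U ∧ cocycle T f n x ∈ V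

/-- Minimality of a homeomorphism: every orbit is dense. -/
def IsMinimal (T : X ≃ₜ X) : Prop :=
  ∀ x : X, Dense (Set.range fun n : ℤ => (T.toEquiv ^ n) x)

/-- A consistent selection of subgroups for the cocycle generated by `f`: a family of
closed subgroups `H x ⊆ E_x(f)` with `H (Tⁿx) = f(n,x)·(H x)·f(n,x)⁻¹` depending
continuously on `x` for the Fell topology. -/
structure IsConsistentSelection (T : X ≃ₜ X) (f : X → G) (H : X → Subgroup G) : Prop where
  isClosed : ∀ x : X, IsClosed (H x : Set G)
  subset_essRange : ∀ x : X, (H x : Set G) ⊆ essRange T f x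
  conj : ∀ (x : X) (n : ℤ), (H ((T.toEquiv ^ n) x) : Set G) =
    (fun h => cocycle T f n x * h * (cocycle T f n x)⁻¹) '' (H x : Set G)
  fell_compact : ∀ (x : X) (K : Set G), IsCompact K → K ∩ (H x : Set G) = ∅ →
    ∃ W ∈ 𝓝 x, ∀ y ∈ W, K ∩ (H y : Set G) = ∅
  fell_open : ∀ (x : X) (O : Set G), IsOpen O → (O ∩ (H x : Set G)).Nonempty →
    ∃ W ∈ 𝓝 x, ∀ y ∈ W, (O ∩ (H y : Set G)).Nonempty

/-- The `T_f`-orbit closure of a point of `X × G`. -/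
def orbitClosure (T : X ≃ₜ X) (f : X → G) (p : X × G) : Set (X × G) :=
  closure (Set.range fun n : ℤ => skewPow T f n p)

/-- For `C ⊆ X × G`, the set `H = {g : C·g⁻¹ = C}`, where `C·g = {(y, c·g) : (y,c) ∈ C}`. -/
def stabSet (C : Set (X × G)) : Set G :=
  {g : G | (fun p : X × G => (p.1, p.2 * g⁻¹)) '' C = C}

/-- A strongly regular orbit closure: a `T_f`-orbit closure which projects onto all
of `X` and all of whose vertical sections are single left cosets of
`H = {g : C·g⁻¹ = C}`. -/
def IsStronglyRegularOC (T : X ≃ₜ X) (f : X → G) (C : Set (X × G)) : Prop :=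
  (∃ p : X × G, C = orbitClosure T f p) ∧ Prod.fst '' C = Set.univ ∧
    ∀ x : X, ∃ gx : G, {g : G | (x, g) ∈ C} = {gx} * stabSet C

/-- A strongly regular cocycle: one whose skew product admits a strongly regular
orbit closure. -/
def IsStronglyRegularCocycle (T : X ≃ₜ X) (f : X → G) : Prop :=
  ∃ C : Set (X × G), IsStronglyRegularOC T f C

/-- A regular cocycle: some `T_f`-orbit closure projects onto all of `X`. -/
def IsRegularCocycle (T : X ≃ₜ X) (f : X → G) : Prop :=
  ∃ p : X × G, Prod.fst '' orbitClosure T f p = Set.univ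

end Defs


set_option linter.unusedSectionVars false

section Aux

variable {X : Type*} [TopologicalSpace X] {G : Type*} [TopologicalSpace G] [Group G]

lemma applyPow (T : X ≃ₜ X) (k n : ℤ) (y : X) :
    (T.toEquiv ^ k) ((T.toEquiv ^ n) y) = (T.toEquiv ^ (k + n)) y := by
  rw [zpow_add, Equiv.Perm.mul_apply]

lemma cocycleNat_succ (T : X ≃ₜ X) (f : X → G) (m : ℕ) (x : X) :
    cocycleNat T f (m + 1) x = f ((T.toEquiv ^ m) x) * cocycleNat T f m x := rfl

lemma cocycleNat_one (T : X ≃ₜ X) (f : X → G) (x : X) :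
    cocycleNat T f 1 x = f x := by
  simp [cocycleNat]

lemma cocycleNat_add (T : X ≃ₜ X) (f : X → G) (a b : ℕ) (x : X) :
    cocycleNat T f (a + b) x = cocycleNat T f a ((T.toEquiv ^ b) x) * cocycleNat T f b x := by
  induction a with
  | zero => simp [cocycleNat]
  | succ a ih =>
      have h : a + 1 + b = (a + b) + 1 := by omega
      rw [h, cocycleNat_succ, ih, cocycleNat_succ, ← Equiv.Perm.mul_apply, ← pow_add, mul_assoc]

lemma cocycle_natCast (T : X ≃ₜ X) (f : X → G) (m : ℕ) (x : X) :
    cocycle T f (m : ℤ) x = cocycleNat T f m x := by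
  simp [cocycle]

lemma cocycle_neg_natCast (T : X ≃ₜ X) (f : X → G) (m : ℕ) (x : X) :
    cocycle T f (-(m : ℤ)) x = (cocycleNat T f m ((T.toEquiv ^ (-(m : ℤ))) x))⁻¹ := by
  rcases Nat.eq_zero_or_pos m with h | h
  · subst h; simp [cocycle, cocycleNat]
  · have h0 : ¬ (0 ≤ -(m : ℤ)) := by omega
    simp [cocycle, h0, h.ne']

lemma cocycle_succ (T : X ≃ₜ X) (f : X → G) (n : ℤ) (x : X) :
    cocycle T f (n + 1) x = f ((T.toEquiv ^ n) x) * cocycle T f n x := by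
  rcases le_or_gt 0 n with h | h
  · lift n to ℕ using h
    have e : (n : ℤ) + 1 = ((n + 1 : ℕ) : ℤ) := by push_cast; ring
    rw [e, cocycle_natCast, cocycle_natCast, cocycleNat_succ, zpow_natCast]
  · obtain ⟨m, rfl⟩ : ∃ m : ℕ, n = -((m + 1 : ℕ) : ℤ) := ⟨(-n - 1).toNat, by omega⟩
    have e1 : -((m + 1 : ℕ) : ℤ) + 1 = -((m : ℕ) : ℤ) := by push_cast; ring
    rw [e1, cocycle_neg_natCast, cocycle_neg_natCast]
    have hz : T.toEquiv ((T.toEquiv ^ (-((m + 1 : ℕ) : ℤ))) x)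
        = (T.toEquiv ^ (-((m : ℕ) : ℤ))) x := by
      have h2 := applyPow T 1 (-((m + 1 : ℕ) : ℤ)) x
      rw [zpow_one] at h2
      rw [h2]; congr 1; push_cast; ring
    have key : cocycleNat T f (m + 1) ((T.toEquiv ^ (-((m + 1 : ℕ) : ℤ))) x)
        = cocycleNat T f m ((T.toEquiv ^ (-((m : ℕ) : ℤ))) x)
          * f ((T.toEquiv ^ (-((m + 1 : ℕ) : ℤ))) x) := by
      rw [cocycleNat_add T f m 1, pow_one, hz, cocycleNat_one]
    rw [key]
    group

lemma cocycle_pred (T : X ≃ₜ X) (f : X → G) (n : ℤ) (x : X) :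
    cocycle T f (n - 1) x = (f ((T.toEquiv ^ (n - 1)) x))⁻¹ * cocycle T f n x := by
  have := cocycle_succ T f (n - 1) x
  rw [sub_add_cancel] at this
  rw [this]
  group

lemma cocycle_add (T : X ≃ₜ X) (f : X → G) (k n : ℤ) (x : X) :
    cocycle T f (k + n) x = cocycle T f k ((T.toEquiv ^ n) x) * cocycle T f n x := by
  induction k using Int.induction_on with
  | zero => simp [cocycle, cocycleNat]
  | succ k ih =>
      have e : (k : ℤ) + 1 + n = (k + n) + 1 := by ring
      rw [e, cocycle_succ, ih, cocycle_succ, applyPow, mul_assoc]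
  | pred k ih =>
      have e : (-(k : ℤ) - 1) + n = (-k + n) - 1 := by ring
      rw [e, cocycle_pred, ih, cocycle_pred, applyPow, mul_assoc]
      congr 3
      ring

lemma cocycle_neg_apply (T : X ≃ₜ X) (f : X → G) (n : ℤ) (x : X) :
    cocycle T f (-n) ((T.toEquiv ^ n) x) = (cocycle T f n x)⁻¹ := by
  have h := cocycle_add T f (-n) n x
  rw [neg_add_cancel] at h
  have h0 : cocycle T f 0 x = 1 := by simp [cocycle, cocycleNat]
  rw [h0] at h
  exact eq_inv_of_mul_eq_one_left h.symm

lemma contPowNat (S : X ≃ₜ X) (m : ℕ) : Continuous fun x : X => (S.toEquiv ^ m) x := by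
  induction m with
  | zero => simpa using continuous_id'
  | succ m ih =>
      have : (fun x : X => (S.toEquiv ^ (m + 1)) x) = fun x => (S.toEquiv ^ m) (S x) := by
        funext x; rw [pow_succ, Equiv.Perm.mul_apply]; rfl
      rw [this]
      exact ih.comp S.continuous

lemma contPowInt (T : X ≃ₜ X) (n : ℤ) : Continuous fun x : X => (T.toEquiv ^ n) x := by
  cases n with
  | ofNat m =>
      have : (T.toEquiv ^ (Int.ofNat m)) = T.toEquiv ^ m := by
        rw [Int.ofNat_eq_natCast, zpow_natCast]
      rw [this]; exact contPowNat T m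
  | negSucc m =>
      have : (T.toEquiv ^ (Int.negSucc m)) = T.symm.toEquiv ^ (m + 1) := by
        rw [zpow_negSucc, ← inv_pow]; rfl
      rw [this]; exact contPowNat T.symm (m + 1)

lemma contCocycleNat (T : X ≃ₜ X) {f : X → G} (hf : Continuous f) [ContinuousMul G]
    (m : ℕ) : Continuous (cocycleNat T f m) := by
  induction m with
  | zero => exact continuous_const
  | succ m ih => exact (hf.comp (contPowNat T m)).mul ih

lemma contCocycle (T : X ≃ₜ X) {f : X → G} (hf : Continuous f) [IsTopologicalGroup G]
    (n : ℤ) : Continuous (cocycle T f n) := by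
  by_cases h : 0 ≤ n
  · have e : cocycle T f n = fun x => cocycleNat T f n.toNat x := by
      funext x; simp [cocycle, h]
    rw [e]; exact contCocycleNat T hf _
  · have e : cocycle T f n = fun x => (cocycleNat T f (-n).toNat ((T.toEquiv ^ n) x))⁻¹ := by
      funext x; simp [cocycle, h]
    rw [e]; exact ((contCocycleNat T hf _).comp (contPowInt T n)).inv

end Aux

lemma key_subset {X : Type*} [TopologicalSpace X] {G : Type*} [TopologicalSpace G] [Group G]
    [IsTopologicalGroup G] (T : X ≃ₜ X) {f : X → G} (hf : Continuous f) (x : X) (n : ℤ)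
    {g : G} (hg : g ∈ essRange T f x) :
    cocycle T f n x * g * (cocycle T f n x)⁻¹ ∈ essRange T f ((T.toEquiv ^ n) x) := by
  intro U hU hxU V hV h1V
  set c := cocycle T f n x with hc
  set d := c * g * c⁻¹ with hd
  obtain ⟨W, hWo, h1W, hWW⟩ := exists_open_nhds_one_mul_subset (hV.mem_nhds h1V)
  obtain ⟨W₁, hW₁o, h1W₁, hW₁W⟩ := exists_open_nhds_one_mul_subset (hWo.mem_nhds h1W)
  have hW₁sub : W₁ ⊆ W := fun w hw => by simpa using hW₁W (Set.mul_mem_mul hw h1W₁)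
  set V₀ : Set G := W₁ ∩ (fun a => d * a⁻¹ * d⁻¹) ⁻¹' W₁ with hV₀
  set V₁ : Set G := (fun b => c * b * c⁻¹) ⁻¹' W₁ with hV₁
  have hV₀o : IsOpen V₀ := hW₁o.inter (hW₁o.preimage (by continuity))
  have hV₁o : IsOpen V₁ := hW₁o.preimage (by continuity)
  have h1V₀ : (1 : G) ∈ V₀ := ⟨h1W₁, by simpa using h1W₁⟩
  have h1V₁ : (1 : G) ∈ V₁ := by simpa [hV₁] using h1W₁
  set W₀ : Set X := (fun y => cocycle T f n y * c⁻¹) ⁻¹' V₀ with hW₀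
  have hW₀o : IsOpen W₀ := hV₀o.preimage ((contCocycle T hf n).mul continuous_const)
  have hxW₀ : x ∈ W₀ := by
    show cocycle T f n x * c⁻¹ ∈ V₀
    rw [← hc, mul_inv_cancel]; exact h1V₀
  set U' : Set X := (fun y => (T.toEquiv ^ n) y) ⁻¹' U ∩ W₀ with hU'
  have hU'o : IsOpen U' := (hU.preimage (contPowInt T n)).inter hW₀o
  have hxU' : x ∈ U' := ⟨hxU, hxW₀⟩
  obtain ⟨k, y, hyU', hTky, v, hvV₁, hck⟩ := hg U' hU'o hxU' V₁ hV₁o h1V₁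
  refine ⟨k, (T.toEquiv ^ n) y, hyU'.1, ?_, ?_⟩
  · rw [applyPow, add_comm, ← applyPow]
    exact hTky.1
  · have hv₁ : cocycle T f n ((T.toEquiv ^ k) y) * c⁻¹ ∈ V₀ := hTky.2
    have hv₂ : cocycle T f n y * c⁻¹ ∈ V₀ := hyU'.2
    refine ⟨(cocycle T f n ((T.toEquiv ^ k) y) * c⁻¹) * (c * v * c⁻¹) *
        (d * (cocycle T f n y * c⁻¹)⁻¹ * d⁻¹), ?_, ?_⟩
    · have h2 : c * v * c⁻¹ ∈ W₁ := hvV₁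
      have h3 : d * (cocycle T f n y * c⁻¹)⁻¹ * d⁻¹ ∈ W₁ := hv₂.2
      exact hWW (Set.mul_mem_mul (hW₁W (Set.mul_mem_mul hv₁.1 h2)) (hW₁sub h3))
    · have h4 := cocycle_add T f k n y
      have h5 := cocycle_add T f n k y
      rw [add_comm k n, h5] at h4
      have h6 : cocycle T f k ((T.toEquiv ^ n) y) =
          cocycle T f n ((T.toEquiv ^ k) y) * cocycle T f k y * (cocycle T f n y)⁻¹ :=
        eq_mul_inv_of_mul_eq h4.symm
      rw [h6, hck, hd]
      group

theorem statement_16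
    {X : Type*} [TopologicalSpace X] [CompactSpace X] [TopologicalSpace.MetrizableSpace X]
    {G : Type*} [TopologicalSpace G] [Group G] [IsTopologicalGroup G]
    [LocallyCompactSpace G] [SecondCountableTopology G] [T2Space G]
    (T : X ≃ₜ X) (hT : IsMinimal T) (f : X → G) (hf : Continuous f)
    (x : X) (n : ℤ) :
    essRange T f ((T.toEquiv ^ n) x) =
      (fun h => cocycle T f n x * h * (cocycle T f n x)⁻¹) '' essRange T f x := by
  apply Set.eq_of_subset_of_subset
  · intro g' hg'
    have hx : (T.toEquiv ^ (-n)) ((T.toEquiv ^ n) x) = x := by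
      rw [applyPow, neg_add_cancel]
      simp
    have hc' : cocycle T f (-n) ((T.toEquiv ^ n) x) = (cocycle T f n x)⁻¹ :=
      cocycle_neg_apply T f n x
    have h2 := key_subset T hf ((T.toEquiv ^ n) x) (-n) hg'
    rw [hx, hc'] at h2
    exact ⟨(cocycle T f n x)⁻¹ * g' * ((cocycle T f n x)⁻¹)⁻¹, h2, by group⟩
  · rintro _ ⟨g, hg, rfl⟩
    exact key_subset T hf x n hg
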